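/- In a commutative algebra A over a field of characteristic not 2 or 3 satisfying (a²)² = 0 for all a, the identity a² · (a · b) = 0 holds for all a, b ∈ A. -/
import Mathlib


structure FourAlgebra (k : Type*) (A : Type*) [Field k] [AddCommGroup A] [Module k A] where
  mul : A →ₗ[k] A →ₗ[k] A
  comm : ∀ a b : A, mul a b = mul b a
  four : ∀ a : A, mul (mul a a) (mul a a) = 0

theorem stmt0 (k A : Type*) [Field k] [AddCommGroup A] [Module k A]
    (h2 : (2 : k) ≠ 0) (h3 : (3 : k) ≠ 0) (F : FourAlgebra k A) (a b : A) :
    F.mul (F.mul a a) (F.mul a b) = 0 := by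
  have e1 := F.four (a + b)
  have e2 := F.four (a - b)
  have e3 := F.four (a + a + b)
  simp only [map_add, map_sub, LinearMap.add_apply, LinearMap.sub_apply,
    F.comm b a, F.comm (F.mul a b) (F.mul a a), F.comm (F.mul b b) (F.mul a a),
    F.comm (F.mul b b) (F.mul a b), F.four a, F.four b] at e1 e2 e3
  have key : (24 : k) • F.mul (F.mul a a) (F.mul a b) = 0 := by
    linear_combination (norm := module) e3 - (3 : k) • e1 - e2
  have h24 : (24 : k) ≠ 0 := by
    have : (24 : k) = 2 * 2 * 2 * 3 := by norm_num
    rw [this]; simp [h2, h3]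
  exact (smul_eq_zero.mp key).resolve_left h24
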